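/- Let A = ⊕_{i=0}^{2n} A^i be a graded commutative ℝ-algebra with zero differential satisfying the hard Lefschetz property with respect to ω ∈ A^2, and let (A ⊗ Λ(y), d) be the elementary extension with dy = ω. Then every defined m-th order a-Massey product ⟨a; b1, …, b_m⟩ with m ≥ 3 of cohomology classes of (A ⊗ Λ(y), d) contains 0. -/

import Mathlib

/-- Product in the elementary extension `A ⊗ Λ(y)` of a graded algebra `A` with zero
differential (`deg y = 1`, `y² = 0`, `y·α = ε(α)·y`): a pair `(α, β)` stands for `α + β·y`,
and `ε` is the parity involution `ε(α) = (-1)^{|α|} α`. -/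
def emul {A : Type*} [Ring A] [Algebra ℝ A] (ε : A →ₗ[ℝ] A) (u v : A × A) : A × A :=
  (u.1 * v.1, u.1 * v.2 + u.2 * ε v.1)

/-- Differential of the elementary extension `(A ⊗ Λ(y), dy = ω)`: `d(α + β·y) = ε(β)·ω`. -/
def eD {A : Type*} [Ring A] [Algebra ℝ A] (ε : A →ₗ[ℝ] A) (ω : A) (u : A × A) : A × A :=
  (ε u.2 * ω, 0)

/-- Ordered product of a list of elements of the extension. -/
def listProd {A : Type*} [Ring A] [Algebra ℝ A] (ε : A →ₗ[ℝ] A)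
    (l : List (A × A)) : A × A :=
  l.foldr (emul ε) (1, 0)


section aux
variable {A : Type*} [Ring A] [Algebra ℝ A] (ε : A →ₗ[ℝ] A)

lemma listProd_cons (a : A × A) (l : List (A × A)) :
    listProd ε (a :: l) = emul ε a (listProd ε l) := rfl

lemma listProd_fst_zero {y : A × A} (hy0 : y.1 = 0) :
    ∀ {l : List (A × A)}, y ∈ l → (listProd ε l).1 = 0 := by
  intro l
  induction l with
  | nil => intro h; simp at h
  | cons a l ih =>
    intro h
    rcases List.mem_cons.mp h with rfl | h'
    · show y.1 * _ = 0
      rw [hy0, zero_mul]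
    · show a.1 * (listProd ε l).1 = 0
      rw [ih h', mul_zero]

lemma emul_zero_right (a : A × A) : emul ε a 0 = 0 := by
  simp [emul, Prod.ext_iff]

lemma listProd_two_zero {x y : A × A} (hx : x.1 = 0) (hy : y.1 = 0) :
    ∀ {l : List (A × A)}, List.Sublist [x, y] l → listProd ε l = 0 := by
  intro l
  induction l with
  | nil => intro h; simp at h
  | cons a l ih =>
    intro h
    cases h with
    | cons _ h' =>
      rw [listProd_cons, ih h', emul_zero_right]
    | cons_cons _ h' =>
      have hyl : y ∈ l := List.singleton_sublist.mp h'
      have h1 : (listProd ε l).1 = 0 := listProd_fst_zero ε hy hyl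
      rw [listProd_cons]
      show (_, _) = (0 : A × A)
      rw [Prod.ext_iff]
      constructor
      · show x.1 * _ = 0; rw [hx, zero_mul]
      · show x.1 * _ + x.2 * ε (listProd ε l).1 = 0
        rw [hx, zero_mul, h1, map_zero, mul_zero, add_zero]

lemma exists_two_indices (m i : ℕ) (hm : 3 ≤ m) :
    ∃ p q : ℕ, p + 1 ≠ i ∧ q + 1 ≠ i ∧ List.Sublist [p, q] (List.range m) := by
  have h3 : List.Sublist (List.range 3) (List.range m) := List.range_sublist.mpr hm
  by_cases h1 : i = 1
  · exact ⟨1, 2, by omega, by omega, List.Sublist.trans (by decide) h3⟩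
  by_cases h2 : i = 2
  · exact ⟨0, 2, by omega, by omega, List.Sublist.trans (by decide) h3⟩
  · exact ⟨0, 1, by omega, by omega, List.Sublist.trans (by decide) h3⟩

end aux

/-- Let `A = ⊕_{i=0}^{2n} Aⁱ` be a graded-commutative ℝ-algebra with zero
differential satisfying the hard Lefschetz property with respect to `ω ∈ A²`, and let
`(A ⊗ Λ(y), dy = ω)` be the elementary extension.  Then every defined `m`-th order `a`-Massey
product `⟨a; b₁, …, b_m⟩` with `m ≥ 3` contains `0`: whenever primitives `ξᵢ` with
`dξᵢ = a·bᵢ` exist, one can choose primitives `ξ'ᵢ` for which the representative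
`Σᵢ (-1)^{|ξ₁|+⋯+|ξ_{i-1}|} ξ'₁⋯ξ'_{i-1}·bᵢ·ξ'_{i+1}⋯ξ'_m` is exact. -/
theorem statement3 {A : Type*} [Ring A] [Algebra ℝ A] (𝒜 : ℕ → Submodule ℝ A)
    [GradedAlgebra 𝒜] (n : ℕ) (ω : A) (hω : ω ∈ 𝒜 2)
    (hbound : ∀ i, 2 * n < i → 𝒜 i = ⊥)
    (hcomm : ∀ i j, ∀ u ∈ 𝒜 i, ∀ v ∈ 𝒜 j, u * v = ((-1 : ℝ) ^ (i * j)) • (v * u))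
    (hLef : ∀ k ≤ n, ∀ z ∈ 𝒜 (n + k), ∃! β, β ∈ 𝒜 (n - k) ∧ β * ω ^ k = z)
    (ε : A →ₗ[ℝ] A) (hε : ∀ i, ∀ v ∈ 𝒜 i, ε v = ((-1 : ℝ) ^ i) • v)
    (m : ℕ) (hm : 3 ≤ m)
    (pa : ℕ) (hpaeven : Even pa) (hpa : 0 < pa)
    (pb : ℕ → ℕ) (hpb : ∀ i, 0 < pb i)
    -- the closed element `a = u.1 + u.2·y` of even degree `pa`:
    (u : A × A) (hu1 : u.1 ∈ 𝒜 pa) (hu2 : u.2 ∈ 𝒜 (pa - 1)) (hud : eD ε ω u = 0)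
    -- the closed elements `bᵢ` of degree `pb i`, `1 ≤ i ≤ m`:
    (bb : ℕ → A × A)
    (hb1 : ∀ i, 1 ≤ i → i ≤ m → (bb i).1 ∈ 𝒜 (pb i))
    (hb2 : ∀ i, 1 ≤ i → i ≤ m → (bb i).2 ∈ 𝒜 (pb i - 1))
    (hbd : ∀ i, 1 ≤ i → i ≤ m → eD ε ω (bb i) = 0)
    -- the `a`-Massey product is defined: primitives `ξᵢ` with `dξᵢ = a·bᵢ` exist:
    (ξ : ℕ → A × A)
    (hξ1 : ∀ i, 1 ≤ i → i ≤ m → (ξ i).1 ∈ 𝒜 (pa + pb i - 1))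
    (hξ2 : ∀ i, 1 ≤ i → i ≤ m → (ξ i).2 ∈ 𝒜 (pa + pb i - 2))
    (hξd : ∀ i, 1 ≤ i → i ≤ m → eD ε ω (ξ i) = emul ε u (bb i)) :
    ∃ ξ' : ℕ → A × A,
      (∀ i, 1 ≤ i → i ≤ m → (ξ' i).1 ∈ 𝒜 (pa + pb i - 1)) ∧
      (∀ i, 1 ≤ i → i ≤ m → (ξ' i).2 ∈ 𝒜 (pa + pb i - 2)) ∧
      (∀ i, 1 ≤ i → i ≤ m → eD ε ω (ξ' i) = emul ε u (bb i)) ∧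
      ∃ w : A × A,
        (∑ i ∈ Finset.Icc 1 m,
          ((-1 : ℝ) ^ (∑ j ∈ Finset.Ico 1 i, (pa + pb j - 1))) •
            listProd ε ((List.range m).map
              (fun t => if t + 1 = i then bb (t + 1) else ξ' (t + 1)))) = eD ε ω w := by
  refine ⟨fun i => (0, (ξ i).2), fun i h1 h2 => Submodule.zero_mem _,
    fun i h1 h2 => hξ2 i h1 h2, fun i h1 h2 => hξd i h1 h2, (0, 0), ?_⟩
  have hD : eD ε ω ((0, 0) : A × A) = 0 := by
    simp [eD, Prod.ext_iff]
  rw [hD]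
  apply Finset.sum_eq_zero
  intro i hi
  obtain ⟨p, q, hp, hq, hsub⟩ := exists_two_indices m i hm
  set f : ℕ → A × A := fun t => if t + 1 = i then bb (t + 1) else (0, (ξ (t + 1)).2) with hf
  have hsub' : List.Sublist [f p, f q] ((List.range m).map f) := by
    simpa using hsub.map f
  have hfp : (f p).1 = 0 := by simp [hf, if_neg hp]
  have hfq : (f q).1 = 0 := by simp [hf, if_neg hq]
  rw [listProd_two_zero ε hfp hfq hsub', smul_zero]
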